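/- arXiv:1001.0242 — 2 statements merged into one kernel-verified Lean document; each statement's English description precedes it below -/
import Mathlib

section
/- Let Ω be an invertible class and β a class on ℙ^n, and let Q = {Q_{d,k}} and P = {P_{d,k}} be (0,1,β,Ω)-Euler data such that Q_{d,0} = P_{d,0} for all d ≥ 0, and such that for all 0 ≤ i ≤ n, all k ≥ 0 and all d ≥ 1 the polynomial Q_{d,k}(λ_i) − P_{d,k}(λ_i) ∈ F[ℏ] has degree at most (n+1)d − 1 in ℏ. Then Q = P, i.e. Q_{d,k} = P_{d,k} as classes on N_d for all d ≥ 0 and k ≥ 0. -/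
open Polynomial

set_option maxHeartbeats 1000000
set_option synthInstance.maxHeartbeats 400000

noncomputable section

/-- The ground field `F = ℂ(λ₀,…,λₙ)`, the field of rational functions in the
equivariant weights `λ₀,…,λₙ`. -/
def F (n : ℕ) : Type := FractionRing (MvPolynomial (Fin (n+1)) ℂ)

instance (n : ℕ) : Field (F n) :=
  inferInstanceAs (Field (FractionRing (MvPolynomial (Fin (n+1)) ℂ)))

instance (n : ℕ) : Algebra (MvPolynomial (Fin (n+1)) ℂ) (F n) :=
  inferInstanceAs (Algebra (MvPolynomial (Fin (n+1)) ℂ)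
    (FractionRing (MvPolynomial (Fin (n+1)) ℂ)))

/-- The weight `λᵢ` as an element of `F`. -/
def lam (n : ℕ) (i : Fin (n+1)) : F n :=
  algebraMap (MvPolynomial (Fin (n+1)) ℂ) (F n) (MvPolynomial.X i)

/-- The polynomial ring `F[ℏ]`.  The variable `X` plays the role of `ℏ`. -/
abbrev Fh (n : ℕ) : Type := Polynomial (F n)

/-- The element `λᵢ + rℏ` of `F[ℏ]`. -/
def pt (n : ℕ) (i : Fin (n+1)) (r : ℕ) : Fh n := C (lam n i) + (r : Fh n) * X

/-- The generator `∏_{l=0}^{n} ∏_{m=0}^{d} (κ − λ_l − mℏ)` of the relation ideal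
of the localized equivariant cohomology of `N_d`; the outer polynomial
variable `X` plays the role of `κ`. -/
def genN (n d : ℕ) : Polynomial (Fh n) :=
  ∏ l : Fin (n+1), ∏ m ∈ Finset.range (d+1), (X - C (pt n l m))

/-- Classes on the linear model `N_d`:
`F[ℏ][κ] / (∏_{l=0}^{n} ∏_{m=0}^{d} (κ − λ_l − mℏ))`. -/
abbrev ClassN (n d : ℕ) : Type :=
  Polynomial (Fh n) ⧸ Ideal.span {genN n d}

lemma eval_genN (n d : ℕ) (i : Fin (n+1)) (r : ℕ) (hr : r ≤ d) :
    Polynomial.eval (pt n i r) (genN n d) = 0 := by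
  rw [genN, Polynomial.eval_prod]
  refine Finset.prod_eq_zero (Finset.mem_univ i) ?_
  rw [Polynomial.eval_prod]
  refine Finset.prod_eq_zero (Finset.mem_range.mpr (Nat.lt_succ_of_le hr)) ?_
  simp

/-- Restriction `Q(λᵢ + rℏ) ∈ F[ℏ]` of a class `Q` on `N_d` (for `r ≤ d`):
evaluation of any representative at `κ = λᵢ + rℏ`. -/
def rest {n d : ℕ} (i : Fin (n+1)) (r : ℕ) (hr : r ≤ d) : ClassN n d →+* Fh n :=
  Ideal.Quotient.lift _ (Polynomial.evalRingHom (pt n i r)) (by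
    intro a ha
    rw [Ideal.mem_span_singleton] at ha
    obtain ⟨c, rfl⟩ := ha
    simp [eval_genN n d i r hr])

/-- `Ω`-Euler data, where the invertible class `Ω` on `ℙⁿ` is identified with the family
of its restrictions `Ω(λᵢ) ∈ F` (the weights `λᵢ` being pairwise distinct, a class on
`ℙⁿ` is precisely such a family). -/
def IsEulerData {n : ℕ} (Ω : Fin (n+1) → F n) (Q : (d : ℕ) → ClassN n d) : Prop :=
  (∀ i, rest i 0 le_rfl (Q 0) = C (Ω i)) ∧
  ∀ d r, 0 < r → ∀ hr : r < d, ∀ i : Fin (n+1),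
    C (Ω i) * rest i r hr.le (Q d) =
      rest i r le_rfl (Q r) * rest i 0 (Nat.zero_le _) (Q (d - r))

/-- `(0,1,β,Ω)`-Euler data; the classes `β`, `Ω` on `ℙⁿ` are identified with the
families of their restrictions at the fixed points. -/
def Is01EulerData {n : ℕ} (β Ω : Fin (n+1) → F n) (Q : (d : ℕ) → ℕ → ClassN n d) : Prop :=
  (∀ (k : ℕ) i, rest i 0 le_rfl (Q 0 k) = C (β i ^ k * Ω i)) ∧
  ∀ d, 1 ≤ d → ∀ r, ∀ hr : r ≤ d, ∀ i : Fin (n+1), ∀ k : ℕ,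
    C (Ω i) * rest i r hr (Q d k) =
      rest i r le_rfl (Q r 0) * rest i 0 (Nat.zero_le _) (Q (d - r) k)

end


section AuxUniq

open Polynomial

/-- Product of distinct linear factors divides a polynomial vanishing at the roots. -/
lemma auxUniq_prod_X_sub_C_dvd {R : Type*} [CommRing R] [IsDomain R] {ι : Type*}
    [DecidableEq ι] (s : Finset ι) (p : ι → R) :
    ∀ f : Polynomial R, (∀ a ∈ s, ∀ b ∈ s, p a = p b → a = b) →
      (∀ a ∈ s, f.eval (p a) = 0) → (∏ a ∈ s, (X - C (p a))) ∣ f := by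
  induction s using Finset.induction_on with
  | empty => intro f _ _; simp
  | @insert a s ha ih =>
    intro f hinj hev
    have h1 : (X - C (p a)) ∣ f :=
      dvd_iff_isRoot.mpr (hev a (Finset.mem_insert_self a s))
    obtain ⟨g, rfl⟩ := h1
    have hg : ∀ b ∈ s, g.eval (p b) = 0 := by
      intro b hb
      have h2 := hev b (Finset.mem_insert_of_mem hb)
      rw [eval_mul, eval_sub, eval_C, eval_X] at h2
      have hne : p b - p a ≠ 0 := by
        refine sub_ne_zero.mpr (fun h => ha ?_)
        have hba : b = a := hinj b (Finset.mem_insert_of_mem hb) a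
          (Finset.mem_insert_self a s) h
        rwa [hba] at hb
      exact (mul_eq_zero.mp h2).resolve_left hne
    rw [Finset.prod_insert ha]
    exact mul_dvd_mul_left _ (ih g
      (fun x hx y hy h => hinj x (Finset.mem_insert_of_mem hx) y
        (Finset.mem_insert_of_mem hy) h) hg)

instance auxUniq_isFractionRing (n : ℕ) :
    IsFractionRing (MvPolynomial (Fin (n+1)) ℂ) (F n) :=
  inferInstanceAs (IsFractionRing (MvPolynomial (Fin (n+1)) ℂ)
    (FractionRing (MvPolynomial (Fin (n+1)) ℂ)))

instance auxUniq_charZero (n : ℕ) : CharZero (F n) :=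
  charZero_of_injective_algebraMap
    (IsFractionRing.injective (MvPolynomial (Fin (n+1)) ℂ) (F n))

lemma auxUniq_lam_injective (n : ℕ) : Function.Injective (lam n) := fun i j h =>
  MvPolynomial.X_injective
    (IsFractionRing.injective (MvPolynomial (Fin (n+1)) ℂ) (F n) h)

lemma auxUniq_pt_eq (n : ℕ) (i : Fin (n+1)) (r : ℕ) :
    pt n i r = C (lam n i) + C ((r : ℕ) : F n) * X := by
  rw [pt, map_natCast (C : F n →+* Fh n)]

lemma auxUniq_pt_inj (n : ℕ) {i j : Fin (n+1)} {r s : ℕ}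
    (h : pt n i r = pt n j s) : i = j ∧ r = s := by
  rw [auxUniq_pt_eq, auxUniq_pt_eq] at h
  have h0 := congrArg (fun q => Polynomial.coeff q 0) h
  have h1 := congrArg (fun q => Polynomial.coeff q 1) h
  simp [coeff_add, coeff_C, coeff_C_mul] at h0 h1
  exact ⟨auxUniq_lam_injective n h0, Nat.cast_injective h1⟩

lemma auxUniq_rest_mk {n d : ℕ} (i : Fin (n+1)) (r : ℕ) (hr : r ≤ d)
    (f : Polynomial (Fh n)) :
    rest i r hr (Ideal.Quotient.mk _ f) = f.eval (pt n i r) := rfl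

lemma auxUniq_genN_monic (n d : ℕ) : (genN n d).Monic :=
  monic_prod_of_monic _ _ (fun _ _ => monic_prod_of_monic _ _ (fun _ _ => monic_X_sub_C _))

lemma auxUniq_genN_eq (n d : ℕ) :
    genN n d = ∏ x ∈ Finset.univ ×ˢ Finset.range (d+1), (X - C (pt n x.1 x.2)) := by
  rw [Finset.prod_product]; rfl

lemma auxUniq_genN_natDegree (n d : ℕ) : (genN n d).natDegree = (n+1)*(d+1) := by
  rw [auxUniq_genN_eq,
    Polynomial.natDegree_prod_of_monic _ _ (fun _ _ => monic_X_sub_C _)]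
  simp [Polynomial.natDegree_X_sub_C, Finset.card_product]

/-- A class all of whose restrictions vanish is zero. -/
lemma auxUniq_classN_zero (n d : ℕ) (D : ClassN n d)
    (h : ∀ (i : Fin (n+1)) (r : ℕ) (hr : r ≤ d), rest i r hr D = 0) : D = 0 := by
  obtain ⟨f, rfl⟩ := Ideal.Quotient.mk_surjective D
  have hdvd : genN n d ∣ f := by
    rw [auxUniq_genN_eq]
    refine auxUniq_prod_X_sub_C_dvd _ _ f ?_ ?_
    · intro a _ b _ hab
      obtain ⟨h1, h2⟩ := auxUniq_pt_inj n hab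
      exact Prod.ext h1 h2
    · intro a haa
      rw [Finset.mem_product, Finset.mem_range] at haa
      have hr : a.2 ≤ d := Nat.lt_succ_iff.mp haa.2
      have := h a.1 a.2 hr
      rwa [auxUniq_rest_mk] at this
  rw [Ideal.Quotient.eq_zero_iff_mem, Ideal.mem_span_singleton]
  exact hdvd

/-- Key vanishing lemma: a class on `N_d` (`d ≥ 1`) whose restrictions at the points
`λ_i + rℏ`, `1 ≤ r ≤ d`, vanish and whose restrictions at the `λ_i` have degree at
most `(n+1)d - 1` is zero. -/
lemma auxUniq_vanish (n d : ℕ) (hd : 1 ≤ d) (D : ClassN n d)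
    (hmid : ∀ (i : Fin (n+1)) (r : ℕ), 1 ≤ r → ∀ hr : r ≤ d, rest i r hr D = 0)
    (hdeg : ∀ i : Fin (n+1),
      (rest i 0 (Nat.zero_le d) D).degree ≤ (((n+1)*d - 1 : ℕ) : WithBot ℕ)) :
    D = 0 := by
  obtain ⟨f0, rfl⟩ := Ideal.Quotient.mk_surjective D
  set f : Polynomial (Fh n) := f0 %ₘ genN n d with hf
  have hmkeq : (Ideal.Quotient.mk (Ideal.span {genN n d})) f0
      = (Ideal.Quotient.mk (Ideal.span {genN n d})) f := by
    rw [Ideal.Quotient.mk_eq_mk_iff_sub_mem, Ideal.mem_span_singleton]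
    rw [hf, Polynomial.modByMonic_eq_sub_mul_div f0 (genN n d)]
    exact ⟨f0 /ₘ genN n d, by ring⟩
  rw [hmkeq]
  set s : Finset (Fin (n+1) × ℕ) := Finset.univ ×ˢ Finset.Icc 1 d with hs
  set A : Polynomial (Fh n) := ∏ x ∈ s, (X - C (pt n x.1 x.2)) with hA
  have hcards : s.card = (n+1)*d := by
    rw [hs, Finset.card_product, Nat.card_Icc]
    simp
  have hAdvd : A ∣ f := by
    refine auxUniq_prod_X_sub_C_dvd _ _ f ?_ ?_
    · intro a _ b _ hab
      obtain ⟨h1, h2⟩ := auxUniq_pt_inj n hab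
      exact Prod.ext h1 h2
    · intro a haa
      rw [hs, Finset.mem_product, Finset.mem_Icc] at haa
      have := hmid a.1 a.2 haa.2.1 haa.2.2
      rw [hmkeq, auxUniq_rest_mk] at this
      exact this
  obtain ⟨g, hg⟩ := hAdvd
  have hAmonic : A.Monic := monic_prod_of_monic _ _ (fun _ _ => monic_X_sub_C _)
  have hAdeg : A.natDegree = (n+1)*d := by
    rw [hA, Polynomial.natDegree_prod_of_monic _ _ (fun _ _ => monic_X_sub_C _)]
    simp [Polynomial.natDegree_X_sub_C, hcards]
  have hgz : g = 0 := by
    by_contra hg0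
    have hfne : f ≠ 0 := by
      rw [hg]; exact mul_ne_zero hAmonic.ne_zero hg0
    -- degree bound on g
    have hfdeg : f.natDegree < (n+1)*(d+1) := by
      have h1 := Polynomial.degree_modByMonic_lt f0 (auxUniq_genN_monic n d)
      rw [← hf] at h1
      have h2 : f.natDegree < (genN n d).natDegree :=
        Polynomial.natDegree_lt_natDegree hfne h1
      rwa [auxUniq_genN_natDegree] at h2
    have hfdegsum : f.natDegree = A.natDegree + g.natDegree := by
      rw [hg]; exact natDegree_mul hAmonic.ne_zero hg0
    have hgdeg : g.natDegree ≤ n := by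
      have hnd : (n+1)*(d+1) = (n+1)*d + (n+1) := by ring
      omega
    -- the evaluations of g at the C λ_i vanish
    have hgev : ∀ i : Fin (n+1), g.eval ((C (lam n i) : Fh n)) = 0 := by
      intro i
      by_contra hgne
      have hpt0 : pt n i 0 = C (lam n i) := by simp [pt]
      have hrw : rest i 0 (Nat.zero_le d)
          ((Ideal.Quotient.mk (Ideal.span {genN n d})) f0)
          = A.eval (C (lam n i)) * g.eval (C (lam n i)) := by
        rw [hmkeq, auxUniq_rest_mk, hpt0, hg, eval_mul]
      -- degree of the evaluated product A
      have hAev : (A.eval ((C (lam n i) : Fh n))).degree = (((n+1)*d : ℕ) : WithBot ℕ) := by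
        rw [hA, Polynomial.eval_prod]
        rw [Polynomial.degree_prod]
        have hfac : ∀ x ∈ s, ((X - C (pt n x.1 x.2)).eval ((C (lam n i) : Fh n))).degree
            = (1 : WithBot ℕ) := by
          intro x hx
          rw [hs, Finset.mem_product, Finset.mem_Icc] at hx
          rw [eval_sub, eval_X, eval_C, auxUniq_pt_eq]
          have heq : (C (lam n i) : Fh n) - (C (lam n x.1) + C ((x.2 : ℕ) : F n) * X)
              = C (-((x.2 : ℕ) : F n)) * X + C (lam n i - lam n x.1) := by
            rw [map_neg, map_sub]; ring
          rw [heq]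
          exact Polynomial.degree_linear (by
            simp only [ne_eq, neg_eq_zero, Nat.cast_eq_zero]
            omega)
        rw [Finset.sum_congr rfl hfac]
        rw [Finset.sum_const, hcards]
        simp [nsmul_eq_mul]
      have hlow : (((n+1)*d : ℕ) : WithBot ℕ)
          ≤ (rest i 0 (Nat.zero_le d)
              ((Ideal.Quotient.mk (Ideal.span {genN n d})) f0)).degree := by
        rw [hrw, Polynomial.degree_mul, hAev]
        exact le_add_of_nonneg_right (Polynomial.zero_le_degree_iff.mpr hgne)
      have hcomb := le_trans hlow (hdeg i)
      have : (n+1)*d ≤ (n+1)*d - 1 := by exact_mod_cast hcomb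
      have hpos : 1 ≤ (n+1)*d := by
        have := Nat.mul_le_mul (Nat.succ_le_succ (Nat.zero_le n)) hd
        simpa using this
      omega
    -- g vanishes at n+1 distinct points but has degree ≤ n
    have hB : (∏ i : Fin (n+1), (X - C ((C (lam n i) : Fh n)))) ∣ g := by
      refine auxUniq_prod_X_sub_C_dvd Finset.univ
        (fun i => (C (lam n i) : Fh n)) g ?_ (fun i _ => hgev i)
      intro a _ b _ hab
      exact auxUniq_lam_injective n (Polynomial.C_injective hab)
    have hBdeg : (∏ i : Fin (n+1), (X - C ((C (lam n i) : Fh n)))).natDegree = n+1 := by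
      rw [Polynomial.natDegree_prod_of_monic _ _ (fun _ _ => monic_X_sub_C _)]
      simp [Polynomial.natDegree_X_sub_C]
    have := Polynomial.natDegree_le_of_dvd hB hg0
    omega
  rw [hg, hgz, mul_zero]
  simp

end AuxUniq

/-- **Uniqueness Lemma for (0,1)-Euler data** (Lemma 3.4 of the paper).
If `Q` and `P` are `(0,1,β,Ω)`-Euler data with the same height-`0` part whose
difference of restrictions at `ℏ = 0`-side fixed points has `ℏ`-degree at most
`(n+1)d − 1`, then `Q = P`. -/
theorem uniqueness_01_euler_data (n : ℕ) (hn : 1 ≤ n)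
    (β Ω : Fin (n+1) → F n) (hΩ : ∀ i, Ω i ≠ 0)
    (Q P : (d : ℕ) → ℕ → ClassN n d)
    (hQ : Is01EulerData β Ω Q) (hP : Is01EulerData β Ω P)
    (h0 : ∀ d, Q d 0 = P d 0)
    (hdeg : ∀ (i : Fin (n+1)) (k d : ℕ), 1 ≤ d →
      (rest i 0 (Nat.zero_le d) (Q d k) - rest i 0 (Nat.zero_le d) (P d k)).degree
        ≤ ((n+1) * d - 1 : ℕ)) :
    ∀ (d k : ℕ), Q d k = P d k := by
  intro d
  induction d using Nat.strong_induction_on with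
  | _ d ih =>
    intro k
    rcases Nat.eq_zero_or_pos d with rfl | hd
    · -- base case `d = 0`: all restrictions agree
      refine sub_eq_zero.mp (auxUniq_classN_zero n 0 _ ?_)
      intro i r hr
      have hr0 : r = 0 := Nat.le_zero.mp hr
      subst hr0
      rw [map_sub, (hQ.1) k i, (hP.1) k i, sub_self]
    · -- inductive step
      have hd1 : 1 ≤ d := hd
      refine sub_eq_zero.mp (auxUniq_vanish n d hd1 _ ?_ ?_)
      · intro i r hr1 hr
        have hQe := hQ.2 d hd1 r hr i k
        have hPe := hP.2 d hd1 r hr i k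
        rw [← h0 r] at hPe
        have hk' : Q (d-r) k = P (d-r) k := ih (d-r) (Nat.sub_lt hd hr1) k
        rw [← hk'] at hPe
        have heq : C (Ω i) * rest i r hr (Q d k) = C (Ω i) * rest i r hr (P d k) :=
          hQe.trans hPe.symm
        have hC : (C (Ω i) : Fh n) ≠ 0 := by
          simpa using hΩ i
        have := mul_left_cancel₀ hC heq
        rw [map_sub, this, sub_self]
      · intro i
        rw [map_sub]
        exact hdeg i k d hd1
end

section
/- Let Ω be an invertible class on ℙ^n and let Q⁰ = {Q⁰_d}_{d≥0} be an Ω-Euler data. For d, k ≥ 0 define the class Q_{d,k} = (κ − dℏ)^k · Q⁰_d on N_d, so that its restrictions are Q_{d,k}(λ_i + rℏ) = (λ_i − (d−r)ℏ)^k · Q⁰_d(λ_i + rℏ). Then Q = {Q_{d,k}}_{d≥0,k≥0} is a (0,1,p,Ω)-Euler data extending Q⁰ (i.e. Q_{d,0} = Q⁰_d for all d). -/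
open Polynomial

set_option maxHeartbeats 1000000
set_option synthInstance.maxHeartbeats 400000

lemma rest_mk {n d : ℕ} (i : Fin (n+1)) (r : ℕ) (hr : r ≤ d) (P : Polynomial (Fh n)) :
    rest i r hr (Ideal.Quotient.mk (Ideal.span {genN n d}) P) = P.eval (pt n i r) := rfl

/-- **Extension Lemma** (Euler-data part): given `Ω`-Euler data `Q⁰`, the classes
`Q_{d,k} = (κ − dℏ)^k·Q⁰_d` on `N_d` — whose restrictions are
`Q_{d,k}(λᵢ+rℏ) = (λᵢ − (d−r)ℏ)^k·Q⁰_d(λᵢ+rℏ)` — form a `(0,1,p,Ω)`-Euler data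
extending `Q⁰`. -/
theorem extension_to_01_euler_data (n : ℕ) (hn : 1 ≤ n)
    (Ω : Fin (n+1) → F n) (hΩ : ∀ i, Ω i ≠ 0)
    (Q0 : (d : ℕ) → ClassN n d) (hQ0 : IsEulerData Ω Q0)
    (Q : (d : ℕ) → ℕ → ClassN n d)
    (hQdef : ∀ d k, Q d k =
      (Ideal.Quotient.mk (Ideal.span {genN n d})
          ((X : Polynomial (Fh n)) - C ((d : Fh n) * X))) ^ k * Q0 d) :
    (∀ (d k : ℕ) (i : Fin (n+1)) (r : ℕ) (hr : r ≤ d),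
      rest i r hr (Q d k) =
        (C (lam n i) - ((d - r : ℕ) : Fh n) * X) ^ k * rest i r hr (Q0 d)) ∧
    Is01EulerData (lam n) Ω Q ∧ (∀ d, Q d 0 = Q0 d) := by
  have key : ∀ (d k : ℕ) (i : Fin (n+1)) (r : ℕ) (hr : r ≤ d),
      rest i r hr (Q d k) =
        (C (lam n i) - ((d - r : ℕ) : Fh n) * X) ^ k * rest i r hr (Q0 d) := by
    intro d k i r hr
    rw [hQdef, map_mul, map_pow, rest_mk]
    congr 2
    simp only [Polynomial.eval_sub, Polynomial.eval_X, Polynomial.eval_C, pt,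
      Nat.cast_sub hr]
    ring
  refine ⟨key, ⟨?_, ?_⟩, ?_⟩
  · intro k i
    rw [key 0 k i 0 le_rfl, hQ0.1 i]
    simp only [Nat.sub_self, Nat.cast_zero, zero_mul, sub_zero, ← C_pow, ← C_mul]
  · intro d hd r hr i k
    rw [key d k i r hr, key r 0 i r le_rfl, key (d - r) k i 0 (Nat.zero_le _)]
    simp only [pow_zero, one_mul, Nat.sub_zero, Nat.sub_self]
    rcases Nat.eq_zero_or_pos r with rfl | hr0
    · rw [hQ0.1 i]
      simp only [Nat.sub_zero]
    rcases eq_or_lt_of_le hr with rfl | hlt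
    · rw [Nat.sub_self, hQ0.1 i]
      ring
    · have h := hQ0.2 d r hr0 hlt i
      linear_combination (C (lam n i) - ((d - r : ℕ) : Fh n) * X) ^ k * h
  · intro d
    rw [hQdef]
    simp
end
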